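/- arXiv:2605.25065 — 5 statements merged into one kernel-verified Lean document; each statement's English description precedes it below -/
import Mathlib

section
/- If a sequence (a_n) of positive reals satisfies (i)' n·a_{n-1} = O(a_n) as n → ∞, and (ii)' for all but finitely many n, the map k ↦ a_k a_{n-k} is decreasing on the range 0 ≤ k < n/2, then (a_n) is gargantuan, i.e., a_{n-1}/a_n → 0 and for each fixed r ≥ 0 one has ∑_{k=r}^{n-r} a_k a_{n-k} = O(a_{n-r}). -/
open Filter Finset

/-- A sequence is *gargantuan* if `a (n-1) / a n → 0` and, for every `r`,
`∑_{k=r}^{n-r} |a k * a (n-k)| = O(|a (n-r)|)`. -/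
def Gargantuan (a : ℕ → ℝ) : Prop :=
  Filter.Tendsto (fun n => a (n - 1) / a n) Filter.atTop (nhds 0) ∧
  ∀ r : ℕ, (fun n => ∑ k ∈ Finset.Icc r (n - r), |a k * a (n - k)|)
      =O[Filter.atTop] fun n => |a (n - r)|

/-- Sufficient conditions for a positive sequence to be gargantuan:
(i)' `n * a (n-1) = O(a n)`; (ii)' for all but finitely many `n`, the map
`k ↦ a k * a (n-k)` is decreasing on `0 ≤ k < n/2`. -/
theorem gargantuan_of_sufficient_conditions (a : ℕ → ℝ) (hpos : ∀ n, 0 < a n)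
    (h1 : (fun n : ℕ => (n : ℝ) * a (n - 1)) =O[atTop] fun n => a n)
    (h2 : ∀ᶠ n : ℕ in atTop, ∀ j k : ℕ, j ≤ k → 2 * k < n →
      a k * a (n - k) ≤ a j * a (n - j)) :
    Gargantuan a := by
  obtain ⟨C, hCpos, hC⟩ := h1.exists_pos
  rw [Asymptotics.isBigOWith_iff, eventually_atTop] at hC
  obtain ⟨N₁, hN₁⟩ := hC
  have hb : ∀ n, N₁ ≤ n → (n : ℝ) * a (n - 1) ≤ C * a n := by
    intro n hn
    have h := hN₁ n hn
    rwa [Real.norm_of_nonneg (mul_nonneg (Nat.cast_nonneg n) (hpos _).le),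
         Real.norm_of_nonneg (hpos n).le] at h
  obtain ⟨N₂, hN₂⟩ := eventually_atTop.mp h2
  constructor
  · have hlim : Tendsto (fun n : ℕ => C / n) atTop (nhds 0) :=
      tendsto_const_div_atTop_nhds_zero_nat C
    apply squeeze_zero' (Eventually.of_forall fun n => (div_nonneg (hpos _).le (hpos _).le))
      ?_ hlim
    filter_upwards [eventually_ge_atTop (max N₁ 1)] with n hn
    have hn1 : N₁ ≤ n := le_trans (le_max_left _ _) hn
    have hnpos : (0:ℝ) < n := by
      have : 1 ≤ n := le_trans (le_max_right _ _) hn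
      exact_mod_cast this
    rw [div_le_div_iff₀ (hpos n) hnpos]
    have h := hb n hn1
    nlinarith
  · intro r
    rw [Asymptotics.isBigO_iff]
    refine ⟨2 * a r + 8 * C * a (r+1), ?_⟩
    filter_upwards [eventually_ge_atTop (2*N₁ + N₂ + 4*r + 8)] with n hn
    set m := n / 2 with hm
    have hmono := hN₂ n (by omega)
    have hmono' := hN₂ (n+1) (by omega)
    have hrm : r + 2 ≤ m := by omega
    -- rewrite norms
    rw [Real.norm_of_nonneg (Finset.sum_nonneg fun k _ => abs_nonneg _),
        Real.norm_of_nonneg (abs_nonneg _), abs_of_pos (hpos (n-r))]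
    have habs : ∑ k ∈ Icc r (n-r), |a k * a (n-k)| = ∑ k ∈ Icc r (n-r), a k * a (n-k) :=
      Finset.sum_congr rfl fun k _ => abs_of_nonneg (mul_pos (hpos k) (hpos _)).le
    rw [habs]
    -- split the sum at m = n/2
    have hsplit : Icc r (n - r) = Icc r m ∪ Ioc m (n - r) := by
      ext k
      simp only [Finset.mem_Icc, Finset.mem_Ioc, Finset.mem_union]
      omega
    have hdisj : Disjoint (Icc r m) (Ioc m (n-r)) := by
      rw [Finset.disjoint_left]
      intro k hk hk'
      simp only [Finset.mem_Icc, Finset.mem_Ioc] at hk hk'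
      omega
    have hS : ∑ k ∈ Icc r (n-r), a k * a (n-k)
        = ∑ k ∈ Icc r m, a k * a (n-k) + ∑ k ∈ Ioc m (n-r), a k * a (n-k) := by
      rw [hsplit, Finset.sum_union hdisj]
    -- reflection: upper part bounded by lower part
    have hrefl : ∑ k ∈ Ioc m (n-r), a k * a (n-k) ≤ ∑ k ∈ Icc r m, a k * a (n-k) := by
      have hinj : ∀ x ∈ Ioc m (n-r), ∀ y ∈ Ioc m (n-r), n - x = n - y → x = y := by
        intro x hx y hy hxy
        simp only [Finset.mem_Ioc] at hx hy
        omega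
      have himg : ∑ j ∈ (Ioc m (n-r)).image (fun k => n - k), a j * a (n-j)
          = ∑ k ∈ Ioc m (n-r), a k * a (n-k) := by
        rw [Finset.sum_image hinj]
        apply Finset.sum_congr rfl
        intro k hk
        simp only [Finset.mem_Ioc] at hk
        have e : n - (n - k) = k := by omega
        rw [e, mul_comm]
      rw [← himg]
      apply Finset.sum_le_sum_of_subset_of_nonneg
      · intro j hj
        simp only [Finset.mem_image, Finset.mem_Ioc, Finset.mem_Icc] at hj ⊢
        obtain ⟨k, hk, rfl⟩ := hj
        omega
      · intro k _ _
        exact (mul_pos (hpos k) (hpos _)).le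
    -- split lower part: T = a r * a (n-r) + interior + middle
    have hTsplit : ∑ k ∈ Icc r m, a k * a (n-k)
        = a r * a (n-r) + ∑ k ∈ Icc (r+1) (m-1), a k * a (n-k) + a m * a (n-m) := by
      have e1 : m = (m - 1) + 1 := by omega
      rw [e1, Finset.sum_Icc_succ_top (by omega : r ≤ m - 1 + 1)]
      rw [show m - 1 + 1 = m from by omega]
      have e2 : Icc r (m-1) = insert r (Ioc r (m-1)) :=
        (Finset.Ioc_insert_left (by omega : r ≤ m - 1)).symm
      rw [e2, Finset.sum_insert (by simp)]
      rw [show Ioc r (m-1) = Icc (r+1) (m-1) from (Finset.Icc_add_one_left_eq_Ioc r (m-1)).symm]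
    -- interior bound
    have hint : ∀ k ∈ Icc (r+1) (m-1), a k * a (n-k) ≤ a (r+1) * a (n-(r+1)) := by
      intro k hk
      simp only [Finset.mem_Icc] at hk
      exact hmono (r+1) k hk.1 (by omega)
    -- (i)' at n - r
    have hbn : ((n - r : ℕ) : ℝ) * a (n - (r+1)) ≤ C * a (n-r) := by
      have h := hb (n-r) (by omega)
      rwa [show n - r - 1 = n - (r+1) from by omega] at h
    have hnr1 : (1:ℝ) ≤ ((n - r : ℕ) : ℝ) := by exact_mod_cast (by omega : 1 ≤ n - r)
    have hn2nr : ((n:ℕ) : ℝ) ≤ 2 * ((n - r : ℕ) : ℝ) := by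
      have : (n:ℕ) ≤ 2 * (n - r) := by omega
      exact_mod_cast this
    have hkey : (n:ℝ) * a (n - (r+1)) ≤ 2 * C * a (n-r) := by
      nlinarith [hpos (n - (r+1)), hpos (n-r)]
    have ha1 : a (n-(r+1)) ≤ C * a (n-r) := by
      nlinarith [hpos (n - (r+1))]
    -- sum over interior
    have hcard : ∑ k ∈ Icc (r+1) (m-1), a k * a (n-k) ≤ (n:ℝ) * (a (r+1) * a (n-(r+1))) := by
      calc ∑ k ∈ Icc (r+1) (m-1), a k * a (n-k)
          ≤ (Icc (r+1) (m-1)).card • (a (r+1) * a (n-(r+1))) :=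
            Finset.sum_le_card_nsmul _ _ _ hint
        _ = ((Icc (r+1) (m-1)).card : ℝ) * (a (r+1) * a (n-(r+1))) := nsmul_eq_mul _ _
        _ ≤ (n:ℝ) * (a (r+1) * a (n-(r+1))) := by
            apply mul_le_mul_of_nonneg_right _ (mul_pos (hpos _) (hpos _)).le
            have : (Icc (r+1) (m-1)).card ≤ n := by
              rw [Nat.card_Icc]; omega
            exact_mod_cast this
    have hq1 : ∑ k ∈ Icc (r+1) (m-1), a k * a (n-k) ≤ 2 * C * (a (r+1) * a (n-r)) := by
      calc ∑ k ∈ Icc (r+1) (m-1), a k * a (n-k)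
          ≤ (n:ℝ) * (a (r+1) * a (n-(r+1))) := hcard
        _ = a (r+1) * ((n:ℝ) * a (n-(r+1))) := by ring
        _ ≤ a (r+1) * (2 * C * a (n-r)) := mul_le_mul_of_nonneg_left hkey (hpos _).le
        _ = 2 * C * (a (r+1) * a (n-r)) := by ring
    -- middle term bound
    have hmid : a m * a (n-m) ≤ 2 * C * (a (r+1) * a (n-r)) := by
      rcases lt_or_eq_of_le (by omega : 2 * m ≤ n) with h2m | h2m
      · have h := hmono (r+1) m (by omega) h2m
        have h' : a (r+1) * a (n-(r+1)) ≤ C * (a (r+1) * a (n-r)) := by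
          calc a (r+1) * a (n-(r+1)) ≤ a (r+1) * (C * a (n-r)) :=
                mul_le_mul_of_nonneg_left ha1 (hpos _).le
            _ = C * (a (r+1) * a (n-r)) := by ring
        have hCX : 0 < C * (a (r+1) * a (n-r)) := mul_pos hCpos (mul_pos (hpos _) (hpos _))
        linarith
      · have hnm : n - m = m := by omega
        rw [hnm]
        have h1m : ((m+1 : ℕ) : ℝ) * a m ≤ C * a (m+1) := by
          have h := hb (m+1) (by omega)
          rwa [show m + 1 - 1 = m from rfl] at h
        have h2m' : a m * a (m+1) ≤ a (r+1) * a (n-r) := by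
          have h := hmono' (r+1) m (by omega) (by omega)
          rwa [show n + 1 - m = m + 1 from by omega,
               show n + 1 - (r+1) = n - r from by omega] at h
        have hm1 : (1:ℝ) ≤ ((m+1 : ℕ) : ℝ) := by exact_mod_cast Nat.one_le_iff_ne_zero.mpr (by omega)
        calc a m * a m ≤ (((m+1 : ℕ) : ℝ) * a m) * a m := by
              nlinarith [hpos m]
          _ ≤ (C * a (m+1)) * a m := mul_le_mul_of_nonneg_right h1m (hpos m).le
          _ = C * (a m * a (m+1)) := by ring
          _ ≤ C * (a (r+1) * a (n-r)) := mul_le_mul_of_nonneg_left h2m' hCpos.le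
          _ ≤ 2 * C * (a (r+1) * a (n-r)) := by
              have hCX : 0 < C * (a (r+1) * a (n-r)) := mul_pos hCpos (mul_pos (hpos _) (hpos _))
              linarith
    -- assemble
    have hT : ∑ k ∈ Icc r m, a k * a (n-k)
        ≤ a r * a (n-r) + 4 * C * (a (r+1) * a (n-r)) := by
      rw [hTsplit]; linarith
    have hfinal : ∑ k ∈ Icc r (n-r), a k * a (n-k)
        ≤ 2 * (a r * a (n-r)) + 8 * (C * (a (r+1) * a (n-r))) := by
      rw [hS]; linarith
    calc ∑ k ∈ Icc r (n-r), a k * a (n-k)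
        ≤ 2 * (a r * a (n-r)) + 8 * (C * (a (r+1) * a (n-r))) := hfinal
      _ = (2 * a r + 8 * C * a (r+1)) * a (n-r) := by ring
end

section
/- The sequence a_n = (ρ+1)^{n(n-1)/2}/n! is gargantuan for every real ρ > 0; that is, a_{n-1}/a_n → 0 as n → ∞, and for every nonnegative integer r, ∑_{k=r}^{n-r} a_k a_{n-k} = O(a_{n-r}) as n → ∞. -/
open Filter Finset Nat

private lemma choose_succ_two (n : ℕ) : (n + 1).choose 2 = n.choose 2 + n := by
  rw [Nat.choose_succ_succ, Nat.choose_one_right, Nat.add_comm]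

private lemma choose_two_add (k m : ℕ) :
    (k + m).choose 2 = k.choose 2 + m.choose 2 + k * m := by
  induction m with
  | zero => simp
  | succ m ih =>
    have h : k + (m + 1) = (k + m) + 1 := by ring
    rw [h, choose_succ_two, ih, choose_succ_two]
    ring

private lemma choose_le_mul_pow (n r j : ℕ) : n.choose (r + j) ≤ n.choose r * n ^ j := by
  induction j with
  | zero => simp
  | succ j ih =>
    calc n.choose (r + (j + 1)) ≤ n.choose (r + j + 1) * (r + j + 1) :=
          Nat.le_mul_of_pos_right _ (Nat.succ_pos _)
      _ = n.choose (r + j) * (n - (r + j)) := Nat.choose_succ_right_eq n (r + j)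
      _ ≤ (n.choose r * n ^ j) * n := Nat.mul_le_mul ih (Nat.sub_le n _)
      _ = n.choose r * n ^ (j + 1) := by ring

set_option maxHeartbeats 1600000 in
/-- The sequence `(ρ+1)^(n(n-1)/2) / n!` of normalized total weights of
edge-weighted graphs is gargantuan for every `ρ > 0`. -/
theorem gargantuan_erdos_renyi (ρ : ℝ) (hρ : 0 < ρ) :
    Gargantuan (fun n => (ρ + 1) ^ (n * (n - 1) / 2) / (n ! : ℝ)) := by
  set q : ℝ := ρ + 1 with hqdef
  have hq1 : 1 < q := by simp [hqdef]; linarith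
  have hq0 : 0 < q := by linarith
  set a : ℕ → ℝ := fun n => q ^ (n * (n - 1) / 2) / (n ! : ℝ) with ha
  have haeq : ∀ n, a n = q ^ (n.choose 2) / (n ! : ℝ) := by
    intro n; rw [ha, Nat.choose_two_right]
  have hapos : ∀ n, 0 < a n := fun n =>
    div_pos (pow_pos hq0 _) (by exact_mod_cast n.factorial_pos)
  constructor
  · -- Part 1 : `a (n-1) / a n → 0`
    have hg : Tendsto (fun m : ℕ => ((m : ℝ) + 1) / q ^ m) atTop (nhds 0) := by
      have h1 : (fun m : ℕ => (m : ℝ) ^ 1) =o[atTop] fun m : ℕ => q ^ m :=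
        isLittleO_pow_const_const_pow_of_one_lt 1 hq1
      have h1' := h1.tendsto_div_nhds_zero
      have h2 : Tendsto (fun m : ℕ => (1 / q) ^ m) atTop (nhds 0) :=
        tendsto_pow_atTop_nhds_zero_of_lt_one (by positivity)
          (by rw [div_lt_one hq0]; linarith)
      have h3 := h1'.add h2
      rw [add_zero] at h3
      refine h3.congr fun m => ?_
      rw [pow_one, div_pow, one_pow, ← add_div]
    have hcomp : Tendsto (fun n : ℕ => (((n - 1 : ℕ) : ℝ) + 1) / q ^ (n - 1))
        atTop (nhds 0) := hg.comp (tendsto_sub_atTop_nat 1)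
    refine hcomp.congr' ?_
    filter_upwards [eventually_ge_atTop 1] with n hn
    obtain ⟨m, rfl⟩ : ∃ m, n = m + 1 := ⟨n - 1, by omega⟩
    simp only [Nat.add_sub_cancel]
    show ((m : ℝ) + 1) / q ^ m = a m / a (m + 1)
    rw [haeq, haeq, choose_succ_two, pow_add, Nat.factorial_succ]
    have h1 : (m ! : ℝ) ≠ 0 := by exact_mod_cast m.factorial_pos.ne'
    have h2 : q ^ m.choose 2 ≠ 0 := (pow_pos hq0 _).ne'
    have h3 : q ^ m ≠ 0 := (pow_pos hq0 _).ne'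
    field_simp
    push_cast
    ring
  · -- Part 2
    intro r
    set t : ℝ := q⁻¹ with htdef
    have ht0 : 0 < t := inv_pos.2 hq0
    have ht1 : t < 1 := inv_lt_one_of_one_lt₀ hq1
    set c : ℝ := Real.sqrt t with hcdef
    have hc0 : 0 < c := Real.sqrt_pos.2 ht0
    have hc1 : c < 1 := by
      rw [hcdef, show (1:ℝ) = Real.sqrt 1 from Real.sqrt_one.symm]
      exact Real.sqrt_lt_sqrt ht0.le ht1
    have hcsq : c ^ 2 = t := Real.sq_sqrt ht0.le
    -- key identity
    have key : ∀ n k : ℕ, k ≤ n →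
        a k * a (n - k) = a n * (n.choose k : ℝ) * t ^ (k * (n - k)) := by
      intro n k hk
      have hfac : (n.choose k : ℝ) * ((k)! : ℝ) * (((n - k))! : ℝ) = (n ! : ℝ) := by
        exact_mod_cast Nat.choose_mul_factorial_mul_factorial hk
      have hexp : n.choose 2 = k.choose 2 + (n - k).choose 2 + k * (n - k) := by
        conv_lhs => rw [show n = k + (n - k) by omega]
        exact choose_two_add k (n - k)
      rw [haeq, haeq, haeq, htdef, inv_pow]
      have h1 : (k ! : ℝ) ≠ 0 := by exact_mod_cast k.factorial_pos.ne'
      have h2 : ((n - k)! : ℝ) ≠ 0 := by exact_mod_cast (n - k).factorial_pos.ne'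
      have h3 : (n ! : ℝ) ≠ 0 := by exact_mod_cast n.factorial_pos.ne'
      have h4 : q ^ (k * (n - k)) ≠ 0 := (pow_pos hq0 _).ne'
      field_simp
      rw [hexp, pow_add, pow_add, ← hfac]
      ring
    -- eventual smallness of u n
    have hu : Tendsto (fun n : ℕ => (n : ℝ) * c ^ (n - 2 * r)) atTop (nhds 0) := by
      have h1 : (fun n : ℕ => (n : ℝ) ^ 1) =o[atTop] fun n : ℕ => (c⁻¹) ^ n :=
        isLittleO_pow_const_const_pow_of_one_lt 1 (one_lt_inv₀ hc0 |>.2 hc1)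
      have h2 := (h1.tendsto_div_nhds_zero).mul_const ((c ^ (2 * r))⁻¹)
      rw [zero_mul] at h2
      refine h2.congr' ?_
      filter_upwards [eventually_ge_atTop (2 * r)] with n hn
      have h3 : c ^ (n - 2 * r) * c ^ (2 * r) = c ^ n := by
        rw [← pow_add]; congr 1; omega
      have h4 : c ^ (2 * r) ≠ 0 := (pow_pos hc0 _).ne'
      have h5 : c ^ n ≠ 0 := (pow_pos hc0 _).ne'
      rw [pow_one, div_eq_mul_inv, inv_pow, inv_inv]
      rw [← h3, mul_assoc, mul_inv_cancel_right₀ h4]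
    have hev : ∀ᶠ n : ℕ in atTop, (n : ℝ) * c ^ (n - 2 * r) ≤ 1 / 2 :=
      hu.eventually_le_const (by norm_num)
    rw [Asymptotics.isBigO_iff]
    refine ⟨4 * a r, ?_⟩
    filter_upwards [hev, eventually_ge_atTop (2 * r + 1)] with n hun hn2
    set u : ℝ := (n : ℝ) * c ^ (n - 2 * r) with hudef
    have hu0 : 0 ≤ u := by positivity
    have hu1 : u ≤ 1 := le_trans hun (by norm_num)
    have hterm : ∀ k ∈ Icc r (n - r),
        a k * a (n - k) ≤ a r * a (n - r) * (u ^ (k - r) + u ^ (n - r - k)) := by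
      intro k hk
      rw [mem_Icc] at hk
      obtain ⟨hk1, hk2⟩ := hk
      obtain ⟨d1, hd1⟩ : ∃ d, k = r + d := ⟨k - r, by omega⟩
      obtain ⟨d2, hd2⟩ : ∃ d, n - k = r + d := ⟨n - k - r, by omega⟩
      have hkn : k ≤ n := by omega
      have hnk : n - k ≤ n := by omega
      have hnr : n - r = r + d1 + d2 := by omega
      have hd1' : k - r = d1 := by omega
      have hd2' : n - r - k = d2 := by omega
      set j : ℕ := min d1 d2 with hjdef
      -- binomial bound
      have hchoose : (n.choose k : ℝ) ≤ (n.choose r : ℝ) * (n : ℝ) ^ j := by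
        have : n.choose k ≤ n.choose r * n ^ j := by
          rcases le_total d1 d2 with h | h
          · rw [hjdef, min_eq_left h, hd1]
            exact choose_le_mul_pow n r d1
          · rw [hjdef, min_eq_right h, ← Nat.choose_symm hkn, hd2]
            exact choose_le_mul_pow n r d2
        exact_mod_cast this
      -- power bound
      have hpow : t ^ (k * (n - k)) ≤ t ^ (r * (n - r)) * (c ^ (n - 2 * r)) ^ j := by
        have e1 : k * (n - k) = r * (n - r) + d1 * d2 := by
          rw [hd2, hnr, hd1]; ring
        rw [e1, pow_add]
        refine mul_le_mul_of_nonneg_left ?_ (by positivity)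
        have e2 : n - 2 * r = d1 + d2 := by omega
        rw [e2, ← pow_mul]
        have e3 : c ^ (2 * (d1 * d2)) = t ^ (d1 * d2) := by
          rw [pow_mul, hcsq]
        rw [← e3]
        apply pow_le_pow_of_le_one hc0.le hc1.le
        rcases le_total d1 d2 with h | h
        · rw [hjdef, min_eq_left h]; nlinarith
        · rw [hjdef, min_eq_right h]; nlinarith
      -- combine
      have hcomb : a k * a (n - k) ≤ a r * a (n - r) * u ^ j := by
        rw [key n k hkn, key n r (by omega)]
        have : a n * (n.choose k : ℝ) * t ^ (k * (n - k)) ≤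
            a n * ((n.choose r : ℝ) * (n : ℝ) ^ j) *
              (t ^ (r * (n - r)) * (c ^ (n - 2 * r)) ^ j) := by
          have han := (hapos n).le
          refine mul_le_mul ?_ hpow (by positivity) (by positivity)
          exact mul_le_mul_of_nonneg_left hchoose han
        refine le_trans this (le_of_eq ?_)
        rw [hudef, mul_pow]
        ring
      refine le_trans hcomb ?_
      refine mul_le_mul_of_nonneg_left ?_ (mul_pos (hapos r) (hapos (n - r))).le
      rw [hd1', hd2']
      rcases le_total d1 d2 with h | h
      · rw [hjdef, min_eq_left h]
        exact le_add_of_nonneg_right (by positivity)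
      · rw [hjdef, min_eq_right h]
        exact le_add_of_nonneg_left (by positivity)
    -- sum the bounds
    have hsum : ∑ k ∈ Icc r (n - r), (u ^ (k - r) + u ^ (n - r - k)) ≤ 4 := by
      have e1 : ∑ k ∈ Icc r (n - r), (u ^ (k - r) + u ^ (n - r - k)) =
          ∑ i ∈ range (n - 2 * r + 1), (u ^ i + u ^ (n - 2 * r - i)) := by
        rw [← Finset.Ico_add_one_right_eq_Icc, Finset.sum_Ico_eq_sum_range]
        have h : n - r + 1 - r = n - 2 * r + 1 := by omega
        rw [h]
        refine sum_congr rfl fun i _ => ?_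
        congr 2
        · omega
        · omega
      rw [e1, Finset.sum_add_distrib]
      have hb : ∀ i : ℕ, u ^ i ≤ (1 / 2 : ℝ) ^ i := fun i =>
        pow_le_pow_left₀ hu0 hun i
      have h1 : ∑ i ∈ range (n - 2 * r + 1), u ^ i ≤ 2 :=
        le_trans (Finset.sum_le_sum fun i _ => hb i) (sum_geometric_two_le _)
      have h2 : ∑ i ∈ range (n - 2 * r + 1), u ^ (n - 2 * r - i) ≤ 2 := by
        have hr := Finset.sum_range_reflect (fun i => u ^ i) (n - 2 * r + 1)
        simp only [Nat.add_sub_cancel] at hr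
        rw [hr]
        exact h1
      linarith
    have hfinal : ∑ k ∈ Icc r (n - r), |a k * a (n - k)| ≤ 4 * a r * a (n - r) := by
      calc ∑ k ∈ Icc r (n - r), |a k * a (n - k)|
          = ∑ k ∈ Icc r (n - r), a k * a (n - k) :=
            sum_congr rfl fun k _ => abs_of_pos (mul_pos (hapos _) (hapos _))
        _ ≤ ∑ k ∈ Icc r (n - r), a r * a (n - r) * (u ^ (k - r) + u ^ (n - r - k)) :=
            Finset.sum_le_sum hterm
        _ = a r * a (n - r) * ∑ k ∈ Icc r (n - r), (u ^ (k - r) + u ^ (n - r - k)) := by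
            rw [Finset.mul_sum]
        _ ≤ a r * a (n - r) * 4 :=
            mul_le_mul_of_nonneg_left hsum (mul_pos (hapos r) (hapos (n - r))).le
        _ = 4 * a r * a (n - r) := by ring
    have hnn : 0 ≤ ∑ k ∈ Icc r (n - r), |a k * a (n - k)| :=
      Finset.sum_nonneg fun k _ => abs_nonneg _
    rw [Real.norm_eq_abs, Real.norm_eq_abs, abs_of_nonneg hnn, abs_abs,
      abs_of_pos (hapos _)]
    exact hfinal
end

section
/- The sequence a_n = ((2n-1)!!)^2 / n! is gargantuan; that is, a_{n-1}/a_n → 0 as n → ∞, and for every nonnegative integer r, ∑_{k=r}^{n-r} a_k a_{n-k} = O(a_{n-r}) as n → ∞. -/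
open Filter Finset Nat

noncomputable def qss (n : ℕ) : ℝ := (((2 * n - 1)‼ : ℝ)) ^ 2 / (n ! : ℝ)

lemma qss_pos (n : ℕ) : 0 < qss n := by
  unfold qss
  have h1 : 0 < ((2 * n - 1)‼ : ℝ) := by exact_mod_cast Nat.doubleFactorial_pos _
  have h2 : 0 < ((n ! : ℕ) : ℝ) := by exact_mod_cast Nat.factorial_pos n
  positivity

lemma qss_succ (n : ℕ) :
    qss (n + 1) = qss n * ((2 * (n : ℝ) + 1) ^ 2 / ((n : ℝ) + 1)) := by
  have hd : (2 * (n + 1) - 1)‼ = (2 * n + 1) * (2 * n - 1)‼ := by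
    cases n with
    | zero => rfl
    | succ m =>
      have h1 : 2 * (m + 1 + 1) - 1 = (2 * (m + 1) - 1) + 2 := by omega
      have h2 : (2 * (m + 1) - 1) + 2 = 2 * (m + 1) + 1 := by omega
      rw [h1, Nat.doubleFactorial, h2]
  unfold qss
  rw [hd, Nat.factorial_succ]
  have h2 : ((n ! : ℕ) : ℝ) ≠ 0 := by exact_mod_cast (Nat.factorial_pos n).ne'
  have h3 : ((n : ℝ) + 1) ≠ 0 := by positivity
  push_cast
  field_simp

lemma qss_step (k m : ℕ) (h : k ≤ m) :
    qss (k + 1) * qss m ≤ qss k * qss (m + 1) := by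
  rw [qss_succ, qss_succ]
  have hk := qss_pos k
  have hm := qss_pos m
  have hcast : (k : ℝ) ≤ (m : ℝ) := by exact_mod_cast h
  have key : (2 * (k : ℝ) + 1) ^ 2 / ((k : ℝ) + 1) ≤ (2 * (m : ℝ) + 1) ^ 2 / ((m : ℝ) + 1) := by
    rw [div_le_div_iff₀ (by positivity) (by positivity)]
    nlinarith [hcast, sq_nonneg ((m : ℝ) - k)]
  have hmul := mul_le_mul_of_nonneg_left key (le_of_lt (mul_pos hk hm))
  nlinarith [hmul]

lemma qss_anti (n j : ℕ) : ∀ k, j ≤ k → 2 * k ≤ n →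
    qss k * qss (n - k) ≤ qss j * qss (n - j) := by
  refine Nat.le_induction ?_ ?_
  · intro _
    exact le_refl _
  · intro k hk ih h2
    have h2' : 2 * k ≤ n := by omega
    have hm : n - k = (n - (k + 1)) + 1 := by omega
    calc qss (k + 1) * qss (n - (k + 1))
        ≤ qss k * qss (n - k) := by
          rw [hm]; exact qss_step k (n - (k + 1)) (by omega)
      _ ≤ qss j * qss (n - j) := ih h2'

lemma qss_tendsto :
    Tendsto (fun n => qss (n - 1) / qss n) atTop (nhds 0) := by
  refine squeeze_zero' ?_ ?_ tendsto_one_div_atTop_nhds_zero_nat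
  · filter_upwards with n
    exact le_of_lt (div_pos (qss_pos _) (qss_pos _))
  · rw [eventually_atTop]
    refine ⟨1, fun n hn => ?_⟩
    obtain ⟨m, rfl⟩ : ∃ m, n = m + 1 := ⟨n - 1, by omega⟩
    have hs : m + 1 - 1 = m := by omega
    push_cast
    rw [div_le_div_iff₀ (qss_pos _) (by positivity : (0:ℝ) < ((m:ℝ) + 1))]
    · rw [qss_succ]
      have hm := qss_pos m
      have h0 : (0:ℝ) ≤ (m:ℝ) := Nat.cast_nonneg m
      have hdiv : ((m:ℝ) + 1) ≤ (2 * (m:ℝ) + 1) ^ 2 / ((m:ℝ) + 1) := by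
        rw [le_div_iff₀ (by positivity)]
        nlinarith [h0]
      push_cast
      nlinarith [mul_le_mul_of_nonneg_left hdiv hm.le]

lemma qss_bigO (r : ℕ) :
    (fun n => ∑ k ∈ Finset.Icc r (n - r), |qss k * qss (n - k)|)
      =O[atTop] fun n => |qss (n - r)| := by
  rw [Asymptotics.isBigO_iff]
  refine ⟨2 * qss r + 2 * qss (r + 1), ?_⟩
  filter_upwards [eventually_ge_atTop (2 * r + 4)] with n hn
  have habs : ∀ k ∈ Finset.Icc r (n - r), |qss k * qss (n - k)| = qss k * qss (n - k) :=
    fun k _ => abs_of_pos (mul_pos (qss_pos _) (qss_pos _))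
  rw [Finset.sum_congr rfl habs]
  have hsum_nonneg : (0:ℝ) ≤ ∑ k ∈ Finset.Icc r (n - r), qss k * qss (n - k) :=
    Finset.sum_nonneg fun k _ => le_of_lt (mul_pos (qss_pos _) (qss_pos _))
  rw [Real.norm_of_nonneg hsum_nonneg, Real.norm_eq_abs, abs_of_pos (qss_pos _)]
  -- split the sum
  have hlt : r < n - r := by omega
  have hset : Finset.Icc r (n - r) = insert r (insert (n - r) (Finset.Ioo r (n - r))) := by
    rw [Finset.Ioo_insert_right hlt, Finset.Ioc_insert_left (le_of_lt hlt)]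
  have hr_notmem : r ∉ insert (n - r) (Finset.Ioo r (n - r)) := by
    simp only [Finset.mem_insert, Finset.mem_Ioo]
    omega
  have hnr_notmem : (n - r) ∉ Finset.Ioo r (n - r) := by
    simp only [Finset.mem_Ioo]
    omega
  rw [hset, Finset.sum_insert hr_notmem, Finset.sum_insert hnr_notmem]
  have hnnr : n - (n - r) = r := by omega
  rw [hnnr]
  -- bound middle terms
  have hb : ∀ k ∈ Finset.Ioo r (n - r), qss k * qss (n - k) ≤ qss (r + 1) * qss (n - (r + 1)) := by
    intro k hk
    simp only [Finset.mem_Ioo] at hk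
    rcases le_or_gt (2 * k) n with h | h
    · exact qss_anti n (r + 1) k (by omega) h
    · have hk' : n - (n - k) = k := by omega
      calc qss k * qss (n - k) = qss (n - k) * qss (n - (n - k)) := by rw [hk', mul_comm]
        _ ≤ qss (r + 1) * qss (n - (r + 1)) := qss_anti n (r + 1) (n - k) (by omega) (by omega)
  have hS : ∑ k ∈ Finset.Ioo r (n - r), qss k * qss (n - k)
      ≤ (Finset.Ioo r (n - r)).card • (qss (r + 1) * qss (n - (r + 1))) :=
    Finset.sum_le_card_nsmul _ _ _ hb
  rw [nsmul_eq_mul, Nat.card_Ioo] at hS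
  have hcard : ((n - r - r - 1 : ℕ) : ℝ) ≤ (n : ℝ) := by exact_mod_cast Nat.le_of_lt_succ (by omega)
  -- key: n * qss (n - r - 1) ≤ 2 * qss (n - r)
  obtain ⟨m, hm⟩ : ∃ m, n - r = m + 1 := ⟨n - r - 1, by omega⟩
  have hnr1 : n - (r + 1) = m := by omega
  have hmr : (r : ℝ) + 3 ≤ (m : ℝ) := by exact_mod_cast (by omega : r + 3 ≤ m)
  have hn_eq : (n : ℝ) = (m : ℝ) + (r : ℝ) + 1 := by exact_mod_cast (by omega : n = m + r + 1)
  have hqm := qss_pos m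
  have key2 : (n : ℝ) * qss m ≤ 2 * qss (n - r) := by
    rw [hm, qss_succ]
    have hdiv : (n : ℝ) ≤ 2 * ((2 * (m : ℝ) + 1) ^ 2 / ((m : ℝ) + 1)) := by
      rw [mul_div_assoc' , le_div_iff₀ (by positivity)]
      nlinarith [hmr, hn_eq]
    calc (n : ℝ) * qss m ≤ (2 * ((2 * (m : ℝ) + 1) ^ 2 / ((m : ℝ) + 1))) * qss m :=
          mul_le_mul_of_nonneg_right hdiv (le_of_lt hqm)
      _ = qss m * ((2 * (m : ℝ) + 1) ^ 2 / ((m : ℝ) + 1)) * 2 := by ring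
      _ = 2 * (qss m * ((2 * (m : ℝ) + 1) ^ 2 / ((m : ℝ) + 1))) := by ring
  rw [hnr1] at hS
  have hS2 : ∑ k ∈ Finset.Ioo r (n - r), qss k * qss (n - k)
      ≤ (n : ℝ) * (qss (r + 1) * qss m) := by
    refine le_trans hS ?_
    have hpos : (0:ℝ) ≤ qss (r + 1) * qss m := le_of_lt (mul_pos (qss_pos _) hqm)
    exact mul_le_mul_of_nonneg_right hcard hpos
  have hS3 : (n : ℝ) * (qss (r + 1) * qss m) ≤ qss (r + 1) * (2 * qss (n - r)) := by
    have := mul_le_mul_of_nonneg_left key2 (le_of_lt (qss_pos (r + 1)))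
    nlinarith [this]
  have hqr := qss_pos r
  have hqnr := qss_pos (n - r)
  rw [abs_of_pos (qss_pos (n - r))]
  nlinarith [hS2, hS3]

/-- The sequence `((2n-1)!!)^2 / n!` (quadratic square-tiled surfaces) is gargantuan. -/
theorem gargantuan_qss :
    Gargantuan (fun n => (((2 * n - 1)‼ : ℝ)) ^ 2 / (n ! : ℝ)) := by
  exact ⟨qss_tendsto, qss_bigO⟩
end

section
/- The sequence b_n = (2n-1)!! is gargantuan; that is, b_{n-1}/b_n → 0 as n → ∞, and for every nonnegative integer r, ∑_{k=r}^{n-r} b_k b_{n-k} = O(b_{n-r}) as n → ∞. -/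
open Filter Finset Nat

lemma df_succ (n : ℕ) : (2*(n+1)-1)‼ = (2*n+1) * (2*n-1)‼ := by
  cases n with
  | zero => simp
  | succ m =>
    have h1 : 2*(m+1+1)-1 = (2*(m+1)-1) + 2 := by omega
    rw [h1, Nat.doubleFactorial_add_two]
    congr 1 <;> omega

lemma bpos (m : ℕ) : (0:ℝ) < ((2*m-1)‼ : ℝ) := by
  exact_mod_cast Nat.doubleFactorial_pos _

lemma part1 : Filter.Tendsto (fun n => ((2*(n-1)-1)‼ : ℝ) / ((2*n-1)‼ : ℝ)) Filter.atTop (nhds 0) := by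
  have h : (fun n : ℕ => ((2*(n-1)-1)‼ : ℝ) / ((2*n-1)‼ : ℝ)) =ᶠ[atTop] (fun n : ℕ => 1 / (2*((n:ℝ)-1)+1)) := by
    filter_upwards [eventually_ge_atTop 1] with n hn
    obtain ⟨m, rfl⟩ : ∃ m, n = m + 1 := ⟨n-1, by omega⟩
    have hb : ((2*(m+1)-1)‼ : ℝ) = (2*m+1 : ℕ) * (2*m-1)‼ := by exact_mod_cast df_succ m
    simp only [Nat.add_sub_cancel]
    rw [hb]
    rw [div_eq_iff (by positivity), one_div]
    push_cast
    field_simp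
    rw [add_sub_cancel_right, div_self (by positivity)]
  refine Tendsto.congr' h.symm ?_
  have h2 : Tendsto (fun n : ℕ => (2*((n:ℝ)-1)+1)) atTop atTop := by
    apply tendsto_atTop_add_const_right
    apply Tendsto.const_mul_atTop (by norm_num : (0:ℝ) < 2)
    exact Filter.tendsto_atTop_add_const_right _ _ tendsto_natCast_atTop_atTop
  refine (tendsto_congr fun n => ?_).mpr h2.inv_tendsto_atTop
  simp [one_div]

-- product identity: telescoping the ratio
lemma L1 (r n : ℕ) : ∀ k, r ≤ k → k ≤ n →
    ((2*k-1)‼ : ℝ) * ((2*(n-k)-1)‼ : ℝ) * ∏ j ∈ Ico r k, ((2*(n-j)-1 : ℕ) : ℝ)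
      = ((2*r-1)‼ : ℝ) * ((2*(n-r)-1)‼ : ℝ) * ∏ j ∈ Ico r k, ((2*j+1 : ℕ) : ℝ) := by
  intro k
  induction k with
  | zero =>
    intro h1 h2
    interval_cases r
    simp
  | succ k ih =>
    intro h1 h2
    rcases Nat.eq_or_lt_of_le h1 with h | h
    · rw [← h]; simp
    · have hrk : r ≤ k := by omega
      have hkn : k ≤ n := by omega
      rw [Finset.prod_Ico_succ_top hrk, Finset.prod_Ico_succ_top hrk]
      have key : ((2*(k+1)-1)‼ : ℝ) * ((2*(n-(k+1))-1)‼ : ℝ) * ((2*(n-k)-1 : ℕ) : ℝ)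
          = ((2*k-1)‼ : ℝ) * ((2*(n-k)-1)‼ : ℝ) * ((2*k+1 : ℕ) : ℝ) := by
        have hb1 : ((2*(k+1)-1)‼ : ℕ) = (2*k+1) * (2*k-1)‼ := df_succ k
        have hm : n - k = (n - (k+1)) + 1 := by omega
        have hb2 : ((2*(n-k)-1)‼ : ℕ) = (2*(n-(k+1))+1) * (2*(n-(k+1))-1)‼ := by
          rw [hm]; exact df_succ _
        have hc : (2*(n-k)-1 : ℕ) = 2*(n-(k+1))+1 := by omega
        rw [hb2, hc]
        push_cast [hb1]
        ring
      calc ((2*(k+1)-1)‼ : ℝ) * ((2*(n-(k+1))-1)‼ : ℝ)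
            * ((∏ j ∈ Ico r k, ((2*(n-j)-1 : ℕ) : ℝ)) * ((2*(n-k)-1 : ℕ) : ℝ))
          = (((2*(k+1)-1)‼ : ℝ) * ((2*(n-(k+1))-1)‼ : ℝ) * ((2*(n-k)-1 : ℕ) : ℝ))
            * ∏ j ∈ Ico r k, ((2*(n-j)-1 : ℕ) : ℝ) := by ring
        _ = (((2*k-1)‼ : ℝ) * ((2*(n-k)-1)‼ : ℝ) * ((2*k+1 : ℕ) : ℝ))
            * ∏ j ∈ Ico r k, ((2*(n-j)-1 : ℕ) : ℝ) := by rw [key]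
        _ = (((2*k-1)‼ : ℝ) * ((2*(n-k)-1)‼ : ℝ) * ∏ j ∈ Ico r k, ((2*(n-j)-1 : ℕ) : ℝ))
            * ((2*k+1 : ℕ) : ℝ) := by ring
        _ = (((2*r-1)‼ : ℝ) * ((2*(n-r)-1)‼ : ℝ) * ∏ j ∈ Ico r k, ((2*j+1 : ℕ) : ℝ))
            * ((2*k+1 : ℕ) : ℝ) := by rw [ih hrk hkn]
        _ = ((2*r-1)‼ : ℝ) * ((2*(n-r)-1)‼ : ℝ)
            * ((∏ j ∈ Ico r k, ((2*j+1 : ℕ) : ℝ)) * ((2*k+1 : ℕ) : ℝ)) := by ring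

-- numerator bound via pairing/AM-GM
lemma L2 (r k : ℕ) (hrk : r ≤ k) :
    ∏ j ∈ Ico r k, ((2*j+1 : ℕ) : ℝ) ≤ (k + r : ℝ) ^ (k - r) := by
  set d := k - r with hd
  have hP : ∏ j ∈ Ico r k, ((2*j+1 : ℕ) : ℝ) = ∏ i ∈ range d, ((2*(r+i)+1 : ℕ) : ℝ) := by
    rw [Finset.prod_Ico_eq_prod_range]
  have hPnn : (0:ℝ) ≤ ∏ i ∈ range d, ((2*(r+i)+1 : ℕ) : ℝ) :=
    Finset.prod_nonneg fun i _ => by positivity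
  have hQnn : (0:ℝ) ≤ (k + r : ℝ) ^ d := by positivity
  rw [hP]
  rcases Nat.eq_zero_or_pos d with h0 | h0
  · simp [h0]
  have hsq : (∏ i ∈ range d, ((2*(r+i)+1 : ℕ) : ℝ)) ^ 2 ≤ ((k + r : ℝ) ^ d) ^ 2 := by
    have hrefl : ∏ i ∈ range d, ((2*(r+(d-1-i))+1 : ℕ) : ℝ)
        = ∏ i ∈ range d, ((2*(r+i)+1 : ℕ) : ℝ) :=
      Finset.prod_range_reflect (fun i => ((2*(r+i)+1 : ℕ) : ℝ)) d
    calc (∏ i ∈ range d, ((2*(r+i)+1 : ℕ) : ℝ)) ^ 2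
        = (∏ i ∈ range d, ((2*(r+i)+1 : ℕ) : ℝ))
          * ∏ i ∈ range d, ((2*(r+(d-1-i))+1 : ℕ) : ℝ) := by rw [hrefl, sq]
      _ = ∏ i ∈ range d, (((2*(r+i)+1 : ℕ) : ℝ) * ((2*(r+(d-1-i))+1 : ℕ) : ℝ)) := by
          rw [Finset.prod_mul_distrib]
      _ ≤ ∏ i ∈ range d, ((k + r : ℝ))^2 := by
          apply Finset.prod_le_prod
          · intro i _; positivity
          · intro i hi
            rw [Finset.mem_range] at hi
            have h1 : (2*(r+i)+1) + (2*(r+(d-1-i))+1) = 2*(k+r) := by omega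
            have ha : ((2*(r+i)+1 : ℕ) : ℝ) + ((2*(r+(d-1-i))+1 : ℕ) : ℝ) = 2*(k+r : ℝ) := by
              push_cast
              exact_mod_cast congrArg (fun x : ℕ => (x : ℝ)) h1
            nlinarith [sq_nonneg (((2*(r+i)+1 : ℕ) : ℝ) - ((2*(r+(d-1-i))+1 : ℕ) : ℝ))]
      _ = ((k + r : ℝ) ^ d) ^ 2 := by rw [Finset.prod_const, Finset.card_range, ← pow_mul, ← pow_mul, Nat.mul_comm]
  exact (pow_le_pow_iff_left₀ hPnn hQnn two_ne_zero).mp hsq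

-- denominator bound
lemma L3 (r n k : ℕ) (hrk : r ≤ k) (hk : 2*k ≤ n) :
    ((n:ℝ) + 1) ^ (k - r) ≤ ∏ j ∈ Ico r k, ((2*(n-j)-1 : ℕ) : ℝ) := by
  calc ((n:ℝ) + 1) ^ (k - r) = ∏ _j ∈ Ico r k, ((n:ℝ) + 1) := by
        rw [Finset.prod_const, Nat.card_Ico]
    _ ≤ ∏ j ∈ Ico r k, ((2*(n-j)-1 : ℕ) : ℝ) := by
        apply Finset.prod_le_prod
        · intro i _; positivity
        · intro j hj
          rw [Finset.mem_Ico] at hj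
          have : n + 1 ≤ 2*(n-j)-1 := by omega
          exact_mod_cast Nat.cast_le.mpr this |>.trans_eq' (by push_cast; ring)

-- pointwise bound for the left half
lemma L4 (r n k : ℕ) (hrk : r ≤ k) (hk : 2*k ≤ n) (hn : 4*r+2 ≤ n) :
    ((2*k-1)‼ : ℝ) * ((2*(n-k)-1)‼ : ℝ)
      ≤ ((2*r-1)‼ : ℝ) * ((2*(n-r)-1)‼ : ℝ) * (3/4 : ℝ) ^ (k - r) := by
  set N := ∏ j ∈ Ico r k, ((2*j+1 : ℕ) : ℝ) with hNdef
  set D := ∏ j ∈ Ico r k, ((2*(n-j)-1 : ℕ) : ℝ) with hDdef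
  have hD : ((n:ℝ) + 1) ^ (k - r) ≤ D := L3 r n k hrk hk
  have hDpos : (0:ℝ) < D := lt_of_lt_of_le (by positivity) hD
  have hN : N ≤ (k + r : ℝ) ^ (k - r) := L2 r k hrk
  have hNnn : (0:ℝ) ≤ N := Finset.prod_nonneg fun i _ => by positivity
  have heq := L1 r n k hrk (by omega)
  have hbk : ((2*k-1)‼ : ℝ) * ((2*(n-k)-1)‼ : ℝ)
      = ((2*r-1)‼ : ℝ) * ((2*(n-r)-1)‼ : ℝ) * (N / D) := by
    field_simp
    linarith [heq]
  rw [hbk]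
  have hA : (0:ℝ) < ((2*r-1)‼ : ℝ) * ((2*(n-r)-1)‼ : ℝ) := mul_pos (bpos r) (bpos (n-r))
  apply mul_le_mul_of_nonneg_left _ hA.le
  calc N / D ≤ (k + r : ℝ) ^ (k - r) / ((n:ℝ) + 1) ^ (k - r) :=
        div_le_div₀ (by positivity) hN (by positivity) hD
    _ = ((k + r : ℝ) / ((n:ℝ) + 1)) ^ (k - r) := by rw [div_pow]
    _ ≤ (3/4 : ℝ) ^ (k - r) := by
        apply pow_le_pow_left₀ (by positivity)
        rw [div_le_iff₀ (by positivity)]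
        have : 4*(k + r) ≤ 3*(n+1) := by omega
        have := (Nat.cast_le (α := ℝ)).mpr this
        push_cast at this ⊢
        linarith

-- sum over the left half
lemma L5 (r n : ℕ) (hn : 4*r+2 ≤ n) :
    ∑ k ∈ Icc r (n/2), ((2*k-1)‼ : ℝ) * ((2*(n-k)-1)‼ : ℝ)
      ≤ 4 * (((2*r-1)‼ : ℝ) * ((2*(n-r)-1)‼ : ℝ)) := by
  set A := ((2*r-1)‼ : ℝ) * ((2*(n-r)-1)‼ : ℝ) with hA
  have hApos : (0:ℝ) < A := mul_pos (bpos r) (bpos (n-r))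
  calc ∑ k ∈ Icc r (n/2), ((2*k-1)‼ : ℝ) * ((2*(n-k)-1)‼ : ℝ)
      ≤ ∑ k ∈ Icc r (n/2), A * (3/4 : ℝ) ^ (k - r) := by
        apply Finset.sum_le_sum
        intro k hk
        rw [Finset.mem_Icc] at hk
        exact L4 r n k hk.1 (by omega) hn
    _ = A * ∑ k ∈ Icc r (n/2), (3/4 : ℝ) ^ (k - r) := by rw [Finset.mul_sum]
    _ ≤ A * 4 := by
        apply mul_le_mul_of_nonneg_left _ hApos.le
        have hr2 : r ≤ n/2 + 1 := by omega
        calc ∑ k ∈ Icc r (n/2), (3/4 : ℝ) ^ (k - r)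
            = ∑ i ∈ range (n/2 + 1 - r), (3/4 : ℝ) ^ i := by
              rw [← Finset.Ico_add_one_right_eq_Icc, Finset.sum_Ico_eq_sum_range]
              apply Finset.sum_congr rfl
              intro i hi
              congr 1
              omega
          _ ≤ 4 := by
              have := geom_sum_eq (by norm_num : (3/4 : ℝ) ≠ 1) (n/2 + 1 - r)
              rw [this]
              have hp : (0:ℝ) ≤ (3/4 : ℝ) ^ (n/2 + 1 - r) := by positivity
              have hp2 : (3/4 : ℝ) ^ (n/2 + 1 - r) ≤ 1 := pow_le_one₀ (by norm_num) (by norm_num)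
              rw [div_le_iff_of_neg (by norm_num : (3/4 : ℝ) - 1 < 0)]
              linarith
    _ = 4 * A := by ring

-- the full sum
lemma main_est (r n : ℕ) (hn : 4*r+2 ≤ n) :
    ∑ k ∈ Icc r (n-r), ((2*k-1)‼ : ℝ) * ((2*(n-k)-1)‼ : ℝ)
      ≤ 8 * (((2*r-1)‼ : ℝ) * ((2*(n-r)-1)‼ : ℝ)) := by
  set f : ℕ → ℝ := fun k => ((2*k-1)‼ : ℝ) * ((2*(n-k)-1)‼ : ℝ) with hf
  have hsplit : ∑ k ∈ Ico r (n/2+1), f k + ∑ k ∈ Ico (n/2+1) (n-r+1), f k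
      = ∑ k ∈ Ico r (n-r+1), f k :=
    Finset.sum_Ico_consecutive f (by omega) (by omega)
  have hIcc1 : Icc r (n-r) = Ico r (n-r+1) := by rw [Finset.Ico_add_one_right_eq_Icc]
  have hIcc2 : Icc r (n/2) = Ico r (n/2+1) := by rw [Finset.Ico_add_one_right_eq_Icc]
  -- reflect the right half
  have hrefl : ∑ k ∈ Ico (n/2+1) (n-r+1), f k = ∑ k ∈ Ico r (n - n/2), f k := by
    apply Finset.sum_nbij' (fun k => n - k) (fun k => n - k)
    · intro a ha; rw [Finset.mem_Ico] at *; omega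
    · intro a ha; rw [Finset.mem_Ico] at *; omega
    · intro a ha; rw [Finset.mem_Ico] at ha; omega
    · intro a ha; rw [Finset.mem_Ico] at ha; omega
    · intro a ha
      rw [Finset.mem_Ico] at ha
      have h1 : n - (n - a) = a := by omega
      simp only [hf, h1, mul_comm]
  have hsub : ∑ k ∈ Ico r (n - n/2), f k ≤ ∑ k ∈ Ico r (n/2+1), f k := by
    apply Finset.sum_le_sum_of_subset_of_nonneg
    · apply Finset.Ico_subset_Ico le_rfl; omega
    · intro i _ _
      exact mul_nonneg (bpos i).le (bpos (n-i)).le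
  have h5 := L5 r n hn
  rw [hIcc2] at h5
  rw [hIcc1, ← hsplit]
  linarith

/-- The double factorial sequence `(2n-1)!!` is gargantuan. -/
theorem gargantuan_doubleFactorial :
    Gargantuan (fun n => ((2 * n - 1)‼ : ℝ)) := by
  constructor
  · exact part1
  · intro r
    rw [Asymptotics.isBigO_iff]
    refine ⟨8 * ((2*r-1)‼ : ℝ), ?_⟩
    filter_upwards [eventually_ge_atTop (4*r+2)] with n hn
    have habs : ∀ k, |((2*k-1)‼ : ℝ) * ((2*(n-k)-1)‼ : ℝ)|
        = ((2*k-1)‼ : ℝ) * ((2*(n-k)-1)‼ : ℝ) := fun k =>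
      abs_of_pos (mul_pos (bpos k) (bpos (n-k)))
    have hsum : ∑ k ∈ Icc r (n-r), |((2*k-1)‼ : ℝ) * ((2*(n-k)-1)‼ : ℝ)|
        = ∑ k ∈ Icc r (n-r), ((2*k-1)‼ : ℝ) * ((2*(n-k)-1)‼ : ℝ) :=
      Finset.sum_congr rfl fun k _ => habs k
    simp only [Real.norm_eq_abs]
    rw [abs_abs, abs_of_pos (bpos (n-r))]
    rw [abs_of_nonneg (Finset.sum_nonneg fun k _ => abs_nonneg _)]
    rw [hsum]
    calc ∑ k ∈ Icc r (n-r), ((2*k-1)‼ : ℝ) * ((2*(n-k)-1)‼ : ℝ)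
        ≤ 8 * (((2*r-1)‼ : ℝ) * ((2*(n-r)-1)‼ : ℝ)) := main_est r n hn
      _ = 8 * ((2*r-1)‼ : ℝ) * ((2*(n-r)-1)‼ : ℝ) := by ring
end

section
/- If two sequences of positive reals (a_n) and (b_n) are both gargantuan, then the pointwise product sequence (a_n b_n) is gargantuan. -/
open Filter Finset

/-- The pointwise product of two gargantuan sequences of positive reals is gargantuan. -/
theorem gargantuan_mul (a b : ℕ → ℝ) (hapos : ∀ n, 0 < a n) (hbpos : ∀ n, 0 < b n)
    (ha : Gargantuan a) (hb : Gargantuan b) :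
    Gargantuan (fun n => a n * b n) := by
  constructor
  · have h := ha.1.mul hb.1
    rw [mul_zero] at h
    refine h.congr fun n => ?_
    rw [div_mul_div_comm]
  · intro r
    obtain ⟨Ca, hCa⟩ := (ha.2 r).bound
    obtain ⟨Cb, hCb⟩ := (hb.2 r).bound
    rw [Asymptotics.isBigO_iff]
    refine ⟨Ca * Cb, ?_⟩
    filter_upwards [hCa, hCb] with n hA hB
    simp only [Real.norm_eq_abs, abs_abs] at hA hB ⊢
    have hA' : ∑ k ∈ Finset.Icc r (n - r), |a k * a (n - k)| ≤ Ca * |a (n - r)| :=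
      le_trans (le_abs_self _) hA
    have hB' : ∑ k ∈ Finset.Icc r (n - r), |b k * b (n - k)| ≤ Cb * |b (n - r)| :=
      le_trans (le_abs_self _) hB
    have hBnn : (0:ℝ) ≤ Cb * |b (n - r)| :=
      le_trans (Finset.sum_nonneg fun i _ => abs_nonneg _) hB'
    have hterm : ∀ k ∈ Finset.Icc r (n - r), |b k * b (n - k)| ≤ Cb * |b (n - r)| :=
      fun k hk => le_trans (Finset.single_le_sum (f := fun i => |b i * b (n - i)|) (fun i _ => abs_nonneg _) hk) hB'
    have hsum_nn : (0:ℝ) ≤ ∑ k ∈ Finset.Icc r (n - r),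
        |a k * b k * (a (n - k) * b (n - k))| :=
      Finset.sum_nonneg fun i _ => abs_nonneg _
    rw [abs_of_nonneg hsum_nn]
    calc ∑ k ∈ Finset.Icc r (n - r), |a k * b k * (a (n - k) * b (n - k))|
        = ∑ k ∈ Finset.Icc r (n - r), |a k * a (n - k)| * |b k * b (n - k)| := by
          refine Finset.sum_congr rfl fun k _ => ?_
          rw [← abs_mul]; ring_nf
      _ ≤ ∑ k ∈ Finset.Icc r (n - r), |a k * a (n - k)| * (Cb * |b (n - r)|) :=
          Finset.sum_le_sum fun k hk =>
            mul_le_mul_of_nonneg_left (hterm k hk) (abs_nonneg _)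
      _ = (∑ k ∈ Finset.Icc r (n - r), |a k * a (n - k)|) * (Cb * |b (n - r)|) := by
          rw [← Finset.sum_mul]
      _ ≤ (Ca * |a (n - r)|) * (Cb * |b (n - r)|) :=
          mul_le_mul_of_nonneg_right hA' hBnn
      _ = Ca * Cb * |a (n - r) * b (n - r)| := by
          rw [abs_mul]; ring
end
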